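/- Triple quad formula (blue): for points A1, A2, A3 in the plane over a field of characteristic not 2, the three points are collinear if and only if (Q1+Q2+Q3)² = 2(Q1²+Q2²+Q3²), where Q1 = Q_b(A2,A3), Q2 = Q_b(A1,A3), Q3 = Q_b(A1,A2). -/
import Mathlib

/-- Blue quadrance between two points. -/
def Qb {F : Type*} [Field F] (X Y : F × F) : F :=
  (Y.1 - X.1) ^ 2 + (Y.2 - X.2) ^ 2

/-- Three points are collinear when the vectors `A2 - A1` and `A3 - A1`
are linearly dependent. -/
def Collinear3 {F : Type*} [Field F] (A1 A2 A3 : F × F) : Prop :=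
  ∃ s t : F, (s, t) ≠ (0, 0) ∧
    s • (A2.1 - A1.1, A2.2 - A1.2) + t • (A3.1 - A1.1, A3.2 - A1.2) = (0, 0)

lemma dep_iff_det {F : Type*} [Field F] (u1 u2 v1 v2 : F) :
    (∃ s t : F, (s, t) ≠ (0, 0) ∧
      s • ((u1, u2) : F × F) + t • ((v1, v2) : F × F) = (0, 0)) ↔
      u1 * v2 - u2 * v1 = 0 := by
  constructor
  · rintro ⟨s, t, hst, h⟩
    have h1 : s * u1 + t * v1 = 0 := congrArg Prod.fst h
    have h2 : s * u2 + t * v2 = 0 := congrArg Prod.snd h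
    rcases eq_or_ne s 0 with hs | hs
    · have ht : t ≠ 0 := by
        intro ht; exact hst (by simp [hs, ht, Prod.ext_iff])
      have : t * (u1 * v2 - u2 * v1) = 0 := by linear_combination u1 * h2 - u2 * h1
      exact (mul_eq_zero.mp this).resolve_left ht
    · have : s * (u1 * v2 - u2 * v1) = 0 := by linear_combination v2 * h1 - v1 * h2
      exact (mul_eq_zero.mp this).resolve_left hs
  · intro hD
    rcases eq_or_ne u1 0 with h1 | h1
    · rcases eq_or_ne u2 0 with h2 | h2
      · exact ⟨1, 0, by simp [Prod.ext_iff], by simp [h1, h2, Prod.ext_iff]⟩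
      · refine ⟨v2, -u2, ?_, ?_⟩
        · simp only [ne_eq, Prod.mk.injEq, not_and, neg_eq_zero]
          intro _ h; exact h2 h
        · simp only [Prod.ext_iff, Prod.fst_add, Prod.snd_add, Prod.smul_fst,
            Prod.smul_snd, smul_eq_mul]
          constructor
          · linear_combination hD
          · ring
    · refine ⟨v1, -u1, ?_, ?_⟩
      · simp only [ne_eq, Prod.mk.injEq, not_and, neg_eq_zero]
        intro _ h; exact h1 h
      · simp only [Prod.ext_iff, Prod.fst_add, Prod.snd_add, Prod.smul_fst,
          Prod.smul_snd, smul_eq_mul]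
        constructor
        · ring
        · linear_combination -hD

lemma det_iff_quad {F : Type*} [Field F] (hchar : (2 : F) ≠ 0) (u1 u2 v1 v2 : F) :
    u1 * v2 - u2 * v1 = 0 ↔
      (((v1 - u1) ^ 2 + (v2 - u2) ^ 2) + (v1 ^ 2 + v2 ^ 2) + (u1 ^ 2 + u2 ^ 2)) ^ 2
        = 2 * (((v1 - u1) ^ 2 + (v2 - u2) ^ 2) ^ 2 + (v1 ^ 2 + v2 ^ 2) ^ 2
            + (u1 ^ 2 + u2 ^ 2) ^ 2) := by
  constructor
  · intro hD
    linear_combination (4 * (u1 * v2 - u2 * v1)) * hD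
  · intro h
    have h4 : (2 * (u1 * v2 - u2 * v1)) ^ 2 = 0 := by linear_combination h
    have := pow_eq_zero_iff (n := 2) (by norm_num) |>.mp h4
    rcases mul_eq_zero.mp this with h | h
    · exact absurd h hchar
    · exact h

/-- Triple quad formula (blue): three points are collinear iff their blue
quadrances satisfy `(Q1+Q2+Q3)² = 2(Q1²+Q2²+Q3²)`. -/
theorem blue_triple_quad {F : Type*} [Field F] (hchar : (2 : F) ≠ 0)
    (A1 A2 A3 : F × F) :
    Collinear3 A1 A2 A3 ↔
      (Qb A2 A3 + Qb A1 A3 + Qb A1 A2) ^ 2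
        = 2 * ((Qb A2 A3) ^ 2 + (Qb A1 A3) ^ 2 + (Qb A1 A2) ^ 2) := by
  have hQ1 : Qb A2 A3 = ((A3.1 - A1.1) - (A2.1 - A1.1)) ^ 2
      + ((A3.2 - A1.2) - (A2.2 - A1.2)) ^ 2 := by
    simp only [Qb]; ring
  have hQ2 : Qb A1 A3 = (A3.1 - A1.1) ^ 2 + (A3.2 - A1.2) ^ 2 := rfl
  have hQ3 : Qb A1 A2 = (A2.1 - A1.1) ^ 2 + (A2.2 - A1.2) ^ 2 := rfl
  rw [hQ1, hQ2, hQ3]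
  exact (dep_iff_det _ _ _ _).trans
    (det_iff_quad hchar (A2.1 - A1.1) (A2.2 - A1.2) (A3.1 - A1.1) (A3.2 - A1.2))
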